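/- Let G be a group with finite-index normal subgroup H, coset representatives x_1,…,x_r, and surjective homomorphisms φ_i : H → G (i = 1,…,r) such that for all i,j there is k with φ_i ∘ (conjugation by x_j) = φ_k. Define K_0 = 1 and K_{n+1} = ⋂_{i=1}^r φ_i^{-1}(K_n). Then each K_n is a normal subgroup of G contained in H. -/

import Mathlib

theorem iterated_endomorphisms_K_normal {G : Type*} [Group G]
    (H : Subgroup G) (hN : H.Normal) (r : ℕ) (x : Fin r → G)
    -- the `x i` are coset representatives: `G = x 1 H ∪ ... ∪ x r H`
    (hcover : ∀ g : G, ∃ (i : Fin r) (h : G), h ∈ H ∧ g = x i * h)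
    (φ : Fin r → (H →* G)) (hsurj : ∀ i, Function.Surjective (φ i))
    -- condition (2): for all `i, j` there is `k` with `φ i ∘ μ_{x j} = φ k`
    (hconj : ∀ i j : Fin r, ∃ k : Fin r, ∀ (h : G) (hh : h ∈ H),
      φ i ⟨x j * h * (x j)⁻¹, hN.conj_mem h hh (x j)⟩ = φ k ⟨h, hh⟩)
    (K : ℕ → Subgroup G) (hK0 : K 0 = ⊥)
    (hKsucc : ∀ n, K (n + 1) = ⨅ i : Fin r, Subgroup.map H.subtype ((K n).comap (φ i))) :
    ∀ n, K n ≤ H ∧ (K n).Normal := by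
  have hr : Nonempty (Fin r) := by
    obtain ⟨i, _, _, _⟩ := hcover 1
    exact ⟨i⟩
  intro n
  induction n with
  | zero =>
    rw [hK0]
    exact ⟨bot_le, inferInstance⟩
  | succ n ih =>
    obtain ⟨hle, hnorm⟩ := ih
    have hle' : K (n + 1) ≤ H := by
      rw [hKsucc]
      obtain ⟨i0⟩ := hr
      refine le_trans (iInf_le _ i0) ?_
      intro g hg
      obtain ⟨y, _, rfl⟩ := hg
      exact y.2
    refine ⟨hle', ?_⟩
    constructor
    intro k hk g
    have kH : k ∈ H := hle' hk
    rw [hKsucc] at hk ⊢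
    rw [Subgroup.mem_iInf] at hk ⊢
    intro i
    obtain ⟨j, h0, hh0, rfl⟩ := hcover g
    obtain ⟨kidx, hkidx⟩ := hconj i j
    have hmem : h0 * k * h0⁻¹ ∈ H := by
      exact H.mul_mem (H.mul_mem hh0 kH) (H.inv_mem hh0)
    have heq : x j * h0 * k * (x j * h0)⁻¹ = x j * (h0 * k * h0⁻¹) * (x j)⁻¹ := by
      group
    have hmem2 : x j * h0 * k * (x j * h0)⁻¹ ∈ H := by
      rw [heq]; exact hN.conj_mem _ hmem _
    rw [Subgroup.mem_map]
    refine ⟨⟨x j * h0 * k * (x j * h0)⁻¹, hmem2⟩, ?_, rfl⟩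
    rw [Subgroup.mem_comap]
    have : (⟨x j * h0 * k * (x j * h0)⁻¹, hmem2⟩ : H)
        = ⟨x j * (h0 * k * h0⁻¹) * (x j)⁻¹, hN.conj_mem _ hmem (x j)⟩ := by
      exact Subtype.ext heq
    rw [this, hkidx _ hmem]
    have hsplit : (⟨h0 * k * h0⁻¹, hmem⟩ : H)
        = ⟨h0, hh0⟩ * ⟨k, kH⟩ * (⟨h0, hh0⟩ : H)⁻¹ := rfl
    rw [hsplit, map_mul, map_mul, map_inv]
    have hφk : φ kidx ⟨k, kH⟩ ∈ K n := by
      have := hk kidx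
      rw [Subgroup.mem_map] at this
      obtain ⟨y, hy, hyk⟩ := this
      have : y = ⟨k, kH⟩ := Subtype.ext hyk
      rwa [this] at hy
    exact hnorm.conj_mem _ hφk _
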